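/- Let K ⊂ ℝⁿ be a nonempty compact set with diameter d. Then there is a unique closed ball of smallest radius containing K, and its radius r satisfies r ≤ d·√(n/(2(n+1))). -/

import Mathlib

open Filter Metric Set
open scoped Topology RealInnerProductSpace

/-- The convex envelope of `g`: pointwise supremum of convex functions below `g`. -/
noncomputable def convEnv {E : Type*} [NormedAddCommGroup E] [NormedSpace ℝ E]
    (g : E → ℝ) (x : E) : ℝ :=
  sSup {y : ℝ | ∃ h : E → ℝ, ConvexOn ℝ Set.univ h ∧ (∀ z, h z ≤ g z) ∧ y = h x}

/-- Upper compensated convex transform. -/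
noncomputable def upperT {E : Type*} [NormedAddCommGroup E] [NormedSpace ℝ E]
    (lam : ℝ) (g : E → ℝ) (x : E) : ℝ :=
  lam * ‖x‖ ^ 2 - convEnv (fun y => lam * ‖y‖ ^ 2 - g y) x

/-- Lower compensated convex transform. -/
noncomputable def lowerT {E : Type*} [NormedAddCommGroup E] [NormedSpace ℝ E]
    (lam : ℝ) (g : E → ℝ) (x : E) : ℝ :=
  convEnv (fun y => g y + lam * ‖y‖ ^ 2) x - lam * ‖x‖ ^ 2

/-- `(c, r)` is a minimal bounding ball of `K`: the closed ball `B̄_r(c)` contains `K`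
and has the smallest radius among all closed balls containing `K`. -/
def IsMinBall {E : Type*} [NormedAddCommGroup E] (K : Set E) (c : E) (r : ℝ) : Prop :=
  0 ≤ r ∧ K ⊆ Metric.closedBall c r ∧ ∀ c' r', K ⊆ Metric.closedBall c' r' → r ≤ r'

open scoped Classical
set_option maxHeartbeats 1000000

section JungAux

lemma sum_dite_embedding {ι κ : Type*} [Fintype ι] [Fintype κ] {M : Type*} [AddCommMonoid M]
    (e : ι ↪ κ) (G : ι → M) [∀ j, Decidable (∃ i, e i = j)] :
    ∑ j : κ, (if h : ∃ i, e i = j then G h.choose else 0) = ∑ i, G i := by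
  classical
  have h1 : ∑ j : κ, (if h : ∃ i, e i = j then G h.choose else 0)
      = ∑ j ∈ Finset.univ.map e, (if h : ∃ i, e i = j then G h.choose else 0) := by
    refine (Finset.sum_subset (Finset.subset_univ _) fun j _ hj => ?_).symm
    rw [dif_neg]
    rintro ⟨i, rfl⟩
    exact hj (Finset.mem_map_of_mem e (Finset.mem_univ i))
  rw [h1, Finset.sum_map]
  refine Finset.sum_congr rfl fun i _ => ?_
  have h : ∃ i', e i' = e i := ⟨i, rfl⟩
  rw [dif_pos h]
  congr 1
  exact e.injective h.choose_spec

lemma isCompact_convexHull_euclidean {n : ℕ} {S : Set (EuclideanSpace ℝ (Fin n))}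
    (hS : IsCompact S) (hne : S.Nonempty) : IsCompact (convexHull ℝ S) := by
  classical
  obtain ⟨s₀, hs₀⟩ := hne
  set m := n + 1 with hm
  let φ : (Fin m → ℝ) × (Fin m → EuclideanSpace ℝ (Fin n)) → EuclideanSpace ℝ (Fin n) :=
    fun p => ∑ i, p.1 i • p.2 i
  have hφ : Continuous φ := by
    apply continuous_finset_sum
    intro i _
    exact ((continuous_apply i).comp continuous_fst).smul ((continuous_apply i).comp continuous_snd)
  have hT : IsCompact ((stdSimplex ℝ (Fin m)) ×ˢ (Set.univ.pi fun _ : Fin m => S)) :=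
    (isCompact_stdSimplex (𝕜 := ℝ) (ι := Fin m)).prod (isCompact_univ_pi fun _ => hS)
  have himg : φ '' ((stdSimplex ℝ (Fin m)) ×ˢ (Set.univ.pi fun _ : Fin m => S)) = convexHull ℝ S := by
    apply Subset.antisymm
    · rintro x ⟨⟨w, z⟩, ⟨hw, hz⟩, rfl⟩
      exact Convex.sum_mem (convex_convexHull ℝ S) (fun i _ => hw.1 i) hw.2
        (fun i _ => subset_convexHull ℝ S (hz i (mem_univ i)))
    · intro x hx
      obtain ⟨ι, hft, z, w, hzS, hai, hwpos, hw1, hwz⟩ := eq_pos_convex_span_of_mem_convexHull hx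
      letI := hft
      have hcard : Fintype.card ι ≤ m := by
        refine hai.card_le_finrank_succ.trans ?_
        have := Submodule.finrank_le (vectorSpan ℝ (Set.range z))
        rw [finrank_euclideanSpace_fin] at this
        omega
      obtain ⟨e⟩ := Function.Embedding.nonempty_of_card_le (by simpa using hcard :
        Fintype.card ι ≤ Fintype.card (Fin m))
      refine ⟨(fun j => if h : ∃ i, e i = j then w h.choose else 0,
               fun j => if h : ∃ i, e i = j then z h.choose else s₀), ⟨⟨?_, ?_⟩, ?_⟩, ?_⟩
      · intro j
        dsimp only
        by_cases h : ∃ i, e i = j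
        · rw [dif_pos h]; exact (hwpos _).le
        · rw [dif_neg h]
      · dsimp only
        exact (sum_dite_embedding e w).trans hw1
      · intro j _
        dsimp only
        by_cases h : ∃ i, e i = j
        · rw [dif_pos h]; exact hzS (mem_range_self _)
        · rw [dif_neg h]; exact hs₀
      · show ∑ j, _ • _ = x
        have hterm : ∀ j : Fin m,
            (if h : ∃ i, e i = j then w h.choose else 0) •
              (if h : ∃ i, e i = j then z h.choose else s₀)
            = (if h : ∃ i, e i = j then w h.choose • z h.choose else 0) := by
          intro j
          by_cases h : ∃ i, e i = j
          · rw [dif_pos h, dif_pos h, dif_pos h]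
          · simp only [dif_neg h, zero_smul]
        rw [Finset.sum_congr rfl fun j _ => hterm j]
        exact (sum_dite_embedding e (fun i => w i • z i)).trans hwz
  rw [← himg]
  exact hT.image hφ

variable {α : Type*} [MetricSpace α]


noncomputable def supRad (K : Set α) (c : α) : ℝ := sSup ((dist c) '' K)

lemma dist_le_supRad {K : Set α} (hKc : IsCompact K) (c : α) {x : α} (hx : x ∈ K) :
    dist c x ≤ supRad K c :=
  le_csSup ((hKc.image (continuous_const.dist continuous_id)).bddAbove) ⟨x, hx, rfl⟩

lemma supRad_le {K : Set α} (hK : K.Nonempty) {c : α} {a : ℝ}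
    (h : ∀ x ∈ K, dist c x ≤ a) : supRad K c ≤ a :=
  csSup_le (hK.image _) (by rintro _ ⟨x, hx, rfl⟩; exact h x hx)

lemma supRad_attained {K : Set α} (hK : K.Nonempty) (hKc : IsCompact K) (c : α) :
    ∃ x ∈ K, dist c x = supRad K c := by
  have h := (hKc.image (show Continuous (dist c) from continuous_const.dist continuous_id)).sSup_mem
    (hK.image (dist c))
  obtain ⟨x, hx, hx'⟩ := h
  exact ⟨x, hx, hx'⟩

lemma supRad_nonneg {K : Set α} (hK : K.Nonempty) (hKc : IsCompact K) (c : α) :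
    0 ≤ supRad K c := by
  obtain ⟨x, hx⟩ := hK
  exact dist_nonneg.trans (dist_le_supRad hKc c hx)

lemma subset_closedBall_supRad {K : Set α} (hKc : IsCompact K) (c : α) :
    K ⊆ closedBall c (supRad K c) := fun x hx => by
  rw [mem_closedBall, dist_comm]; exact dist_le_supRad hKc c hx

lemma supRad_le_of_subset {K : Set α} (hK : K.Nonempty) {c : α} {r : ℝ}
    (h : K ⊆ closedBall c r) : supRad K c ≤ r :=
  supRad_le hK fun x hx => by rw [dist_comm]; exact h hx

lemma continuous_supRad {K : Set α} (hK : K.Nonempty) (hKc : IsCompact K) :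
    Continuous (supRad K) := by
  have key : ∀ c c' : α, supRad K c ≤ supRad K c' + dist c c' := by
    intro c c'
    refine supRad_le hK fun x hx => ?_
    calc dist c x ≤ dist c c' + dist c' x := dist_triangle _ _ _
      _ ≤ dist c c' + supRad K c' := by linarith [dist_le_supRad hKc c' hx]
      _ = supRad K c' + dist c c' := by ring
  have : LipschitzWith 1 (supRad K) := by
    refine LipschitzWith.of_dist_le_mul fun c c' => ?_
    simp only [Real.dist_eq, NNReal.coe_one, one_mul, abs_sub_le_iff]
    constructor
    · linarith [key c c']
    · have := key c' c; rw [dist_comm c' c] at this; linarith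
  exact this.continuous


lemma exists_minBall (K : Set (EuclideanSpace ℝ (Fin n))) (hK : K.Nonempty)
    (hKc : IsCompact K) : ∃ c, IsMinBall K c (supRad K c) := by
  obtain ⟨x₀, hx₀⟩ := hK
  have hKne : K.Nonempty := ⟨x₀, hx₀⟩
  set R := supRad K x₀ with hR
  have hR0 : 0 ≤ R := supRad_nonneg hKne hKc x₀
  have hB : IsCompact (closedBall x₀ (R + 1)) := isCompact_closedBall _ _
  obtain ⟨c, hcB, hc⟩ := hB.exists_isMinOn ⟨x₀, by simp [mem_closedBall]; linarith⟩
    ((continuous_supRad hKne hKc).continuousOn)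
  have hglobal : ∀ y, supRad K c ≤ supRad K y := by
    intro y
    by_cases hy : y ∈ closedBall x₀ (R + 1)
    · exact hc hy
    · have h1 : supRad K c ≤ R := hc (by simp [mem_closedBall]; linarith)
      have h2 : R + 1 < dist y x₀ := by
        by_contra h
        exact hy (by simp [mem_closedBall]; linarith)
      have h3 : dist y x₀ ≤ supRad K y := dist_le_supRad hKc y hx₀
      linarith
  refine ⟨c, supRad_nonneg hKne hKc c, subset_closedBall_supRad hKc c, fun c' r' h => ?_⟩
  exact (hglobal c').trans (supRad_le_of_subset hKne h)

lemma minBall_radius_eq {K : Set (EuclideanSpace ℝ (Fin n))} (hK : K.Nonempty)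
    (hKc : IsCompact K) {c : EuclideanSpace ℝ (Fin n)} {r : ℝ} (h : IsMinBall K c r) :
    r = supRad K c :=
  le_antisymm (h.2.2 c _ (subset_closedBall_supRad hKc c)) (supRad_le_of_subset hK h.2.1)

lemma minBall_unique {K : Set (EuclideanSpace ℝ (Fin n))} (hK : K.Nonempty)
    {c₁ c₂ : EuclideanSpace ℝ (Fin n)} {r₁ r₂ : ℝ}
    (h₁ : IsMinBall K c₁ r₁) (h₂ : IsMinBall K c₂ r₂) : c₁ = c₂ ∧ r₁ = r₂ := by
  have hr : r₁ = r₂ := le_antisymm (h₁.2.2 c₂ r₂ h₂.2.1) (h₂.2.2 c₁ r₁ h₁.2.1)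
  subst hr
  refine ⟨?_, rfl⟩
  by_contra hne
  set m : EuclideanSpace ℝ (Fin n) := (2:ℝ)⁻¹ • (c₁ + c₂) with hm
  have hε : 0 < ‖c₂ - c₁‖ := by
    rw [norm_pos_iff, sub_ne_zero]
    exact fun h => hne h.symm
  have hbound : ∀ x ∈ K, ‖x - m‖ ^ 2 ≤ r₁ ^ 2 - ‖c₂ - c₁‖ ^ 2 / 4 := by
    intro x hx
    have h1 : ‖x - c₁‖ ≤ r₁ := by
      have := h₁.2.1 hx; rw [mem_closedBall, dist_eq_norm] at this; exact this
    have h2 : ‖x - c₂‖ ≤ r₁ := by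
      have := h₂.2.1 hx; rw [mem_closedBall, dist_eq_norm] at this; exact this
    have hpar : ‖(x - c₁) + (x - c₂)‖ ^ 2 + ‖(x - c₁) - (x - c₂)‖ ^ 2
        = 2 * (‖x - c₁‖ ^ 2 + ‖x - c₂‖ ^ 2) := by
      rw [norm_add_sq_real (x - c₁) (x - c₂), norm_sub_sq_real (x - c₁) (x - c₂)]; ring
    have hxm : (x - c₁) + (x - c₂) = (2:ℝ) • (x - m) := by
      rw [hm]; module
    have hc : (x - c₁) - (x - c₂) = c₂ - c₁ := by abel
    rw [hxm, hc, norm_smul] at hpar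
    simp only [Real.norm_ofNat] at hpar
    have h1' : ‖x - c₁‖ ^ 2 ≤ r₁ ^ 2 := by
      have := norm_nonneg (x - c₁); nlinarith
    have h2' : ‖x - c₂‖ ^ 2 ≤ r₁ ^ 2 := by
      have := norm_nonneg (x - c₂); nlinarith
    nlinarith
  have hr2 : 0 ≤ r₁ ^ 2 - ‖c₂ - c₁‖ ^ 2 / 4 := by
    obtain ⟨x, hx⟩ := hK
    have := hbound x hx
    nlinarith [sq_nonneg ‖x - m‖]
  have hsub : K ⊆ closedBall m (Real.sqrt (r₁ ^ 2 - ‖c₂ - c₁‖ ^ 2 / 4)) := by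
    intro x hx
    rw [mem_closedBall, dist_eq_norm]
    rw [show ‖x - m‖ = Real.sqrt (‖x - m‖ ^ 2) from (Real.sqrt_sq (norm_nonneg _)).symm]
    exact Real.sqrt_le_sqrt (hbound x hx)
  have := h₁.2.2 _ _ hsub
  have hsq : Real.sqrt (r₁ ^ 2 - ‖c₂ - c₁‖ ^ 2 / 4) ^ 2 = r₁ ^ 2 - ‖c₂ - c₁‖ ^ 2 / 4 :=
    Real.sq_sqrt hr2
  nlinarith [h₁.1, Real.sqrt_nonneg (r₁ ^ 2 - ‖c₂ - c₁‖ ^ 2 / 4)]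

variable {n : ℕ}


lemma center_mem_hull {K : Set (EuclideanSpace ℝ (Fin n))} (hK : K.Nonempty)
    (hKc : IsCompact K) {c : EuclideanSpace ℝ (Fin n)} {r : ℝ}
    (h : IsMinBall K c r) (hr : 0 < r)
    (hatt : ∃ x ∈ K, dist c x = r) :
    c ∈ convexHull ℝ (K ∩ sphere c r) := by
  set S := K ∩ sphere c r with hS
  have hScpt : IsCompact S := hKc.inter_right isClosed_sphere
  have hSne : S.Nonempty := by
    obtain ⟨x, hx, hx'⟩ := hatt
    exact ⟨x, hx, by rwa [mem_sphere, dist_comm]⟩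
  have hSsub : S ⊆ K := inter_subset_left
  by_contra hc
  have hcl : IsClosed (convexHull ℝ S) := (isCompact_convexHull_euclidean hScpt hSne).isClosed
  obtain ⟨f, u, hfc, hfb⟩ := geometric_hahn_banach_point_closed (convex_convexHull ℝ S) hcl hc
  set v : EuclideanSpace ℝ (Fin n) := (InnerProductSpace.toDual ℝ _).symm f with hv
  have hfv : ∀ x, f x = ⟪v, x⟫ := fun x => (InnerProductSpace.toDual_symm_apply).symm
  set δ : ℝ := u - ⟪v, c⟫ with hδ
  have hδ0 : 0 < δ := by
    have := hfc; rw [hfv] at this; simp only [hδ]; linarith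
  have hSv : ∀ x ∈ S, δ ≤ ⟪v, x - c⟫ := by
    intro x hx
    have := hfb x (subset_convexHull ℝ S hx)
    rw [hfv] at this
    rw [inner_sub_right]
    simp only [hδ]; linarith
  have hvne : v ≠ 0 := by
    intro h0
    obtain ⟨x, hx⟩ := hSne
    have := hSv x hx
    rw [h0, inner_zero_left] at this
    linarith
  have hvn : 0 < ‖v‖ := norm_pos_iff.mpr hvne
  -- the "far" part of K
  set B := K ∩ {x | ⟪v, x - c⟫ ≤ δ / 2} with hB
  have hBc : IsCompact B := hKc.inter_right <| isClosed_le
    (Continuous.inner continuous_const (continuous_id.sub continuous_const)) continuous_const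
  obtain ⟨rB, hrB_lt, hrB⟩ : ∃ rB, rB < r ∧ ∀ x ∈ B, dist x c ≤ rB := by
    rcases eq_empty_or_nonempty B with hBe | hBne
    · exact ⟨0, hr, fun x hx => by rw [hBe] at hx; exact absurd hx (notMem_empty x)⟩
    · obtain ⟨x₀, hx₀B, hx₀max⟩ := hBc.exists_isMaxOn hBne
        ((continuous_id.dist continuous_const).continuousOn :
          ContinuousOn (fun x => dist x c) B)
      refine ⟨dist x₀ c, ?_, fun x hx => hx₀max hx⟩
      have hle : dist x₀ c ≤ r := by
        have := h.2.1 hx₀B.1; rwa [mem_closedBall] at this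
      rcases lt_or_eq_of_le hle with hlt | heq
      · exact hlt
      · exfalso
        have hsph : x₀ ∈ S := ⟨hx₀B.1, by rwa [mem_sphere]⟩
        have := hSv x₀ hsph
        have := hx₀B.2
        simp only [mem_setOf_eq] at this
        linarith
  -- choose the step size
  set t : ℝ := min ((r - rB) / (2 * ‖v‖)) (δ / (2 * ‖v‖ ^ 2)) with ht
  have ht0 : 0 < t := lt_min (div_pos (by linarith) (by positivity)) (div_pos hδ0 (by positivity))
  have htv : t * ‖v‖ ≤ (r - rB) / 2 := by
    have h1 : t ≤ (r - rB) / (2 * ‖v‖) := min_le_left _ _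
    calc t * ‖v‖ ≤ ((r - rB) / (2 * ‖v‖)) * ‖v‖ := by nlinarith
      _ = (r - rB) / 2 := by field_simp
  have htδ : t * ‖v‖ ^ 2 ≤ δ / 2 := by
    have h1 : t ≤ δ / (2 * ‖v‖ ^ 2) := min_le_right _ _
    have hv2 : 0 < ‖v‖ ^ 2 := by positivity
    calc t * ‖v‖ ^ 2 ≤ (δ / (2 * ‖v‖ ^ 2)) * ‖v‖ ^ 2 := by nlinarith
      _ = δ / 2 := by field_simp
  set c' := c + t • v with hc'
  set r' : ℝ := max (rB + t * ‖v‖) (Real.sqrt (r ^ 2 - t * δ / 2)) with hr'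
  have hr'r : r' < r := by
    refine max_lt ?_ ?_
    · nlinarith
    · exact (Real.sqrt_lt' hr).mpr (by nlinarith)
  have hsub : K ⊆ closedBall c' r' := by
    intro x hx
    rw [mem_closedBall]
    by_cases hxB : ⟪v, x - c⟫ ≤ δ / 2
    · have hxB' : x ∈ B := ⟨hx, hxB⟩
      calc dist x c' ≤ dist x c + dist c c' := dist_triangle _ _ _
        _ ≤ rB + t * ‖v‖ := by
            refine add_le_add (hrB x hxB') ?_
            rw [hc', dist_eq_norm, show c - (c + t • v) = -(t • v) by abel, norm_neg,
              norm_smul, Real.norm_eq_abs, abs_of_pos ht0]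
        _ ≤ r' := le_max_left _ _
    · push_neg at hxB
      have hd2 : dist x c' ^ 2 ≤ r ^ 2 - t * δ / 2 := by
        have hxc : ‖x - c‖ ≤ r := by
          have := h.2.1 hx; rwa [mem_closedBall, dist_eq_norm] at this
        have hexp : dist x c' ^ 2 = ‖x - c‖ ^ 2 - 2 * (t * ⟪v, x - c⟫) + t ^ 2 * ‖v‖ ^ 2 := by
          rw [dist_eq_norm, hc', show x - (c + t • v) = (x - c) - t • v by abel,
            norm_sub_sq_real, real_inner_smul_right, norm_smul, Real.norm_eq_abs,
            abs_of_pos ht0, real_inner_comm]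
          ring
        have hn2 : ‖x - c‖ ^ 2 ≤ r ^ 2 := by nlinarith [norm_nonneg (x - c)]
        rw [hexp]
        nlinarith
      have : dist x c' ≤ Real.sqrt (r ^ 2 - t * δ / 2) := by
        rw [show dist x c' = Real.sqrt (dist x c' ^ 2) from (Real.sqrt_sq dist_nonneg).symm]
        exact Real.sqrt_le_sqrt hd2
      exact this.trans (le_max_right _ _)
  have := h.2.2 c' r' hsub
  linarith


lemma jung_sq_bound {K : Set (EuclideanSpace ℝ (Fin n))} (hKc : IsCompact K)
    {c : EuclideanSpace ℝ (Fin n)} {r : ℝ}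
    (hch : c ∈ convexHull ℝ (K ∩ sphere c r)) :
    2 * r ^ 2 ≤ diam K ^ 2 * ((n : ℝ) / ((n : ℝ) + 1)) := by
  obtain ⟨ι, hft, z, w, hzS, hai, hwpos, hw1, hwz⟩ := eq_pos_convex_span_of_mem_convexHull hch
  letI := hft
  set d := diam K with hd
  have hd0 : 0 ≤ d := diam_nonneg
  have hzK : ∀ i, z i ∈ K := fun i => (hzS (mem_range_self i)).1
  have hzr : ∀ i, ‖z i - c‖ = r := fun i => by
    have h := (hzS (mem_range_self i)).2
    rwa [mem_sphere, dist_eq_norm] at h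
  have hcardn : (Fintype.card ι : ℝ) ≤ (n : ℝ) + 1 := by
    have h1 : Fintype.card ι ≤ n + 1 := by
      refine hai.card_le_finrank_succ.trans ?_
      have h2 := Submodule.finrank_le (vectorSpan ℝ (Set.range z))
      rw [finrank_euclideanSpace_fin] at h2
      omega
    exact_mod_cast h1
  have hne : Nonempty ι := by
    rcases isEmpty_or_nonempty ι with he | hne
    · exfalso; simp [Finset.univ_eq_empty] at hw1
    · exact hne
  have hsum0 : ∑ i, w i • (z i - c) = (0 : EuclideanSpace ℝ (Fin n)) := by
    simp only [smul_sub]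
    rw [Finset.sum_sub_distrib, ← Finset.sum_smul, hw1, one_smul, hwz, sub_self]
  have key : ∀ j, ∑ i, w i * ‖z i - z j‖ ^ 2 = 2 * r ^ 2 := by
    intro j
    have hterm : ∀ i, w i * ‖z i - z j‖ ^ 2
        = w i * (2 * r ^ 2) - 2 * (w i * ⟪z i - c, z j - c⟫) := by
      intro i
      rw [show z i - z j = (z i - c) - (z j - c) by abel, norm_sub_sq_real, hzr i, hzr j]
      ring
    calc ∑ i, w i * ‖z i - z j‖ ^ 2
        = ∑ i, (w i * (2 * r ^ 2) - 2 * (w i * ⟪z i - c, z j - c⟫)) :=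
          Finset.sum_congr rfl fun i _ => hterm i
      _ = (∑ i, w i) * (2 * r ^ 2) - 2 * ⟪∑ i, w i • (z i - c), z j - c⟫ := by
          rw [Finset.sum_sub_distrib, ← Finset.sum_mul, ← Finset.mul_sum]
          congr 2
          rw [sum_inner]
          exact Finset.sum_congr rfl fun i _ => (real_inner_smul_left _ _ _).symm
      _ = 2 * r ^ 2 := by rw [hw1, hsum0, inner_zero_left]; ring
  have herase : ∀ j : ι, ∑ i ∈ Finset.univ.erase j, w i = 1 - w j := by
    intro j
    have h := Finset.add_sum_erase Finset.univ w (Finset.mem_univ j)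
    rw [hw1] at h
    linarith
  have hstep : ∀ j : ι, w j * (2 * r ^ 2) ≤ w j * ((1 - w j) * d ^ 2) := by
    intro j
    have h1 : w j * (2 * r ^ 2) = ∑ i, w j * (w i * ‖z i - z j‖ ^ 2) := by
      rw [← Finset.mul_sum, key j]
    have h2 : ∑ i, w j * (w i * ‖z i - z j‖ ^ 2)
        = ∑ i ∈ Finset.univ.erase j, w j * (w i * ‖z i - z j‖ ^ 2) :=
      (Finset.sum_erase _ (by simp)).symm
    have h3 : ∑ i ∈ Finset.univ.erase j, w j * (w i * ‖z i - z j‖ ^ 2)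
        ≤ ∑ i ∈ Finset.univ.erase j, w j * (w i * d ^ 2) := by
      refine Finset.sum_le_sum fun i _ => ?_
      have hdij : ‖z i - z j‖ ≤ d := by
        rw [← dist_eq_norm]; exact dist_le_diam_of_mem hKc.isBounded (hzK i) (hzK j)
      have hsq : ‖z i - z j‖ ^ 2 ≤ d ^ 2 := by nlinarith [norm_nonneg (z i - z j)]
      have hwi := (hwpos i).le
      have hwj := (hwpos j).le
      nlinarith [mul_le_mul_of_nonneg_left hsq (mul_nonneg hwj hwi)]
    have h4 : ∑ i ∈ Finset.univ.erase j, w j * (w i * d ^ 2) = w j * ((1 - w j) * d ^ 2) := by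
      have : ∀ i : ι, w j * (w i * d ^ 2) = w i * (w j * d ^ 2) := fun i => by ring
      rw [Finset.sum_congr rfl (fun i _ => this i), ← Finset.sum_mul, herase j]
      ring
    linarith [h1, h2 ▸ h1, h3, h4.symm ▸ h3]
  have hfinal : 2 * r ^ 2 ≤ (1 - ∑ j, w j ^ 2) * d ^ 2 := by
    have hsum := Finset.sum_le_sum fun j (_ : j ∈ Finset.univ) => hstep j
    rw [← Finset.sum_mul, hw1, one_mul] at hsum
    have hre : ∑ j, w j * ((1 - w j) * d ^ 2) = (1 - ∑ j, w j ^ 2) * d ^ 2 := by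
      have h : ∀ j : ι, w j * ((1 - w j) * d ^ 2) = (w j - w j ^ 2) * d ^ 2 := fun j => by ring
      rw [Finset.sum_congr rfl (fun j _ => h j), ← Finset.sum_mul, Finset.sum_sub_distrib, hw1]
    linarith [hre ▸ hsum]
  have hcs : (1 : ℝ) ≤ (Fintype.card ι : ℝ) * ∑ j, w j ^ 2 := by
    have h := sq_sum_le_card_mul_sum_sq (s := Finset.univ) (f := w)
    rw [hw1, Finset.card_univ] at h
    simpa using h
  set s := ∑ j, w j ^ 2 with hs
  have hs0 : 0 ≤ s := Finset.sum_nonneg fun j _ => sq_nonneg _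
  have hnp : (0 : ℝ) < (n : ℝ) + 1 := by positivity
  have hq : 1 - s ≤ (n : ℝ) / ((n : ℝ) + 1) := by
    rw [le_div_iff₀ hnp]
    nlinarith
  have hmul : (1 - s) * d ^ 2 ≤ ((n : ℝ) / ((n : ℝ) + 1)) * d ^ 2 :=
    mul_le_mul_of_nonneg_right hq (sq_nonneg d)
  nlinarith [hfinal, hmul]

end JungAux

theorem stmt_5 {n : ℕ} (K : Set (EuclideanSpace ℝ (Fin n))) (hK : K.Nonempty)
    (hKc : IsCompact K) :
    ∃! p : EuclideanSpace ℝ (Fin n) × ℝ, IsMinBall K p.1 p.2 ∧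
      p.2 ≤ Metric.diam K * Real.sqrt (n / (2 * (n + 1))) := by
  obtain ⟨c, hmin⟩ := exists_minBall K hK hKc
  set r := supRad K c with hrdef
  have hbound : r ≤ diam K * Real.sqrt ((n : ℝ) / (2 * ((n : ℝ) + 1))) := by
    rcases eq_or_lt_of_le hmin.1 with h0 | hrpos
    · rw [← h0]; positivity
    · have hatt : ∃ x ∈ K, dist c x = r := supRad_attained hK hKc c
      have hch := center_mem_hull hK hKc hmin hrpos hatt
      have h2 := jung_sq_bound hKc hch
      set d := diam K with hd
      have hd0 : 0 ≤ d := diam_nonneg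
      have hq : r ^ 2 ≤ d ^ 2 * ((n : ℝ) / (2 * ((n : ℝ) + 1))) := by
        have hnp : (0 : ℝ) < (n : ℝ) + 1 := by positivity
        have heq : d ^ 2 * ((n : ℝ) / (2 * ((n : ℝ) + 1)))
            = d ^ 2 * ((n : ℝ) / ((n : ℝ) + 1)) / 2 := by
          field_simp
          try exact Or.inl (by ring)
          try ring
        rw [heq]
        linarith
      calc r = Real.sqrt (r ^ 2) := (Real.sqrt_sq hmin.1).symm
        _ ≤ Real.sqrt (d ^ 2 * ((n : ℝ) / (2 * ((n : ℝ) + 1)))) := Real.sqrt_le_sqrt hq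
        _ = d * Real.sqrt ((n : ℝ) / (2 * ((n : ℝ) + 1))) := by
            rw [Real.sqrt_mul (sq_nonneg d), Real.sqrt_sq hd0]
  refine ⟨(c, r), ⟨hmin, hbound⟩, ?_⟩
  rintro ⟨c', r'⟩ ⟨h', _⟩
  obtain ⟨hc, hr⟩ := minBall_unique hK h' hmin
  exact Prod.ext hc hr
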